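/- Let P and P' be probability measures on ℝ² supported on {1,2,3,...} × {1,2,3,...}, and let G be a probability measure on ℝ² whose two coordinate marginals are atomless and which satisfies: for every (x,y) ∈ ℝ², G({(x',y') : x' > x and y' > y}) > 0. Let (T₁,T₂) ~ P (resp. P') and (C₁,C₂) ~ G be independent, and define Z_j = min(T_j,C_j), Δ_j = 1{T_j ≤ C_j} for j = 1,2. If the law of (Z₁, Δ₁, Z₂, Δ₂) under P ⊗ G equals the law of (Z₁, Δ₁, Z₂, Δ₂) under P' ⊗ G, then P = P'. -/

import Mathlib

open MeasureTheory

/-- Identifiability (Section 3): for survival distributions `P, P'` supported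
on `{1,2,...}²` and a censoring distribution `G` with atomless marginals that
charges every open upper quadrant, if the laws of the observables
`(Z₁, Δ₁, Z₂, Δ₂)` (with `Zⱼ = min Tⱼ Cⱼ`, `Δⱼ = 1{Tⱼ ≤ Cⱼ}`) under `P ⊗ G`
and `P' ⊗ G` coincide, then `P = P'`. -/
theorem stmt13 (P P' G : Measure (ℝ × ℝ))
    [IsProbabilityMeasure P] [IsProbabilityMeasure P'] [IsProbabilityMeasure G]
    (hP : P {p | (∃ n : ℕ, 1 ≤ n ∧ p.1 = n) ∧ (∃ m : ℕ, 1 ≤ m ∧ p.2 = m)} = 1)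
    (hP' : P' {p | (∃ n : ℕ, 1 ≤ n ∧ p.1 = n) ∧ (∃ m : ℕ, 1 ≤ m ∧ p.2 = m)} = 1)
    (hG1 : ∀ x : ℝ, G {c | c.1 = x} = 0)
    (hG2 : ∀ y : ℝ, G {c | c.2 = y} = 0)
    (hGsupp : ∀ x y : ℝ, 0 < G {c | x < c.1 ∧ y < c.2})
    (φ : (ℝ × ℝ) × (ℝ × ℝ) → ℝ × ℝ × ℝ × ℝ)
    (hφ : φ = fun q => (min q.1.1 q.2.1, if q.1.1 ≤ q.2.1 then (1 : ℝ) else 0,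
        min q.1.2 q.2.2, if q.1.2 ≤ q.2.2 then (1 : ℝ) else 0))
    (hobs : (P.prod G).map φ = (P'.prod G).map φ) :
    P = P' := by
  set S : Set (ℝ × ℝ) :=
    {p | (∃ n : ℕ, 1 ≤ n ∧ p.1 = n) ∧ (∃ m : ℕ, 1 ≤ m ∧ p.2 = m)} with hS
  -- measurability of φ
  have hle1 : MeasurableSet {q : (ℝ × ℝ) × (ℝ × ℝ) | q.1.1 ≤ q.2.1} :=
    measurableSet_le (measurable_fst.fst) (measurable_snd.fst)
  have hle2 : MeasurableSet {q : (ℝ × ℝ) × (ℝ × ℝ) | q.1.2 ≤ q.2.2} :=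
    measurableSet_le (measurable_fst.snd) (measurable_snd.snd)
  have hφm : Measurable φ := by
    rw [hφ]
    refine Measurable.prod ?_ (Measurable.prod ?_ (Measurable.prod ?_ ?_)) <;>
      simp only
    · exact (measurable_fst.fst).min (measurable_snd.fst)
    · exact Measurable.ite hle1 measurable_const measurable_const
    · exact (measurable_fst.snd).min (measurable_snd.snd)
    · exact Measurable.ite hle2 measurable_const measurable_const
  -- preimage computation
  have hpre : ∀ a b : ℝ, φ ⁻¹' {(a, 1, b, 1)} =
      ({(a, b)} : Set (ℝ × ℝ)) ×ˢ {c : ℝ × ℝ | a ≤ c.1 ∧ b ≤ c.2} := by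
    intro a b
    ext q
    simp only [hφ, Set.mem_preimage, Set.mem_singleton_iff, Prod.mk.injEq, Set.mem_prod,
      Set.mem_setOf_eq]
    constructor
    · rintro ⟨h1, h2, h3, h4⟩
      have ht1 : q.1.1 ≤ q.2.1 := by
        by_contra h; simp [h] at h2
      have ht2 : q.1.2 ≤ q.2.2 := by
        by_contra h; simp [h] at h4
      rw [min_eq_left ht1] at h1
      rw [min_eq_left ht2] at h3
      refine ⟨?_, h1 ▸ ht1, h3 ▸ ht2⟩
      · exact Prod.ext h1 h3
    · rintro ⟨hq, hc1, hc2⟩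
      have h1 : q.1.1 = a := by rw [hq]
      have h2 : q.1.2 = b := by rw [hq]
      subst h1; subst h2
      simp [min_eq_left hc1, min_eq_left hc2, hc1, hc2]
  -- singleton equality on the grid
  have hsing : ∀ a b : ℝ, P {(a, b)} = P' {(a, b)} := by
    intro a b
    have hQm : MeasurableSet {c : ℝ × ℝ | a ≤ c.1 ∧ b ≤ c.2} :=
      (measurableSet_le measurable_const measurable_fst).inter
        (measurableSet_le measurable_const measurable_snd)
    have hQpos : G {c : ℝ × ℝ | a ≤ c.1 ∧ b ≤ c.2} ≠ 0 := by
      refine ne_of_gt (lt_of_lt_of_le (hGsupp a b) (measure_mono ?_))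
      rintro c ⟨h1, h2⟩; exact ⟨le_of_lt h1, le_of_lt h2⟩
    have hQfin : G {c : ℝ × ℝ | a ≤ c.1 ∧ b ≤ c.2} ≠ ⊤ := measure_ne_top G _
    have h1 : ((P.prod G).map φ) {(a, 1, b, 1)} =
        P {(a, b)} * G {c : ℝ × ℝ | a ≤ c.1 ∧ b ≤ c.2} := by
      rw [Measure.map_apply hφm (measurableSet_singleton _), hpre a b,
        Measure.prod_prod]
    have h2 : ((P'.prod G).map φ) {(a, 1, b, 1)} =
        P' {(a, b)} * G {c : ℝ × ℝ | a ≤ c.1 ∧ b ≤ c.2} := by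
      rw [Measure.map_apply hφm (measurableSet_singleton _), hpre a b,
        Measure.prod_prod]
    have := h1.symm.trans ((congrFun (congrArg _ hobs) _).trans h2)
    exact (ENNReal.mul_left_inj hQpos hQfin).1 this
  -- S is countable and measurable, both measures concentrate on S
  have hSc : S.Countable := by
    have : S ⊆ Set.range (fun p : ℕ × ℕ => ((p.1 : ℝ), (p.2 : ℝ))) := by
      rintro ⟨x, y⟩ ⟨⟨n, _, hx⟩, ⟨m, _, hy⟩⟩
      exact ⟨(n, m), by simp only []; exact Prod.ext hx.symm hy.symm⟩
    exact (Set.countable_range _).mono this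
  have hSm : MeasurableSet S := hSc.measurableSet
  have hPc : P Sᶜ = 0 := by
    rw [measure_compl hSm (measure_ne_top P S), hP, measure_univ, tsub_self]
  have hP'c : P' Sᶜ = 0 := by
    rw [measure_compl hSm (measure_ne_top P' S), hP', measure_univ, tsub_self]
  -- conclude
  ext A hA
  have key : ∀ (μ : Measure (ℝ × ℝ)), μ Sᶜ = 0 → MeasurableSet A →
      μ A = ∑' x : ↥(A ∩ S), μ {(x : ℝ × ℝ)} := by
    intro μ hμ hA
    have hAS : μ A = μ (A ∩ S) := by
      have : μ (A \ S) = 0 :=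
        measure_mono_null (Set.diff_subset_compl A S) hμ
      rw [← measure_inter_add_diff A hSm, this, add_zero]
    have hb := measure_biUnion (s := A ∩ S) (f := fun x => {x}) (μ := μ)
      (hSc.mono Set.inter_subset_right)
      (fun x _ y _ hxy => by simp [Function.onFun, hxy])
      (fun b _ => measurableSet_singleton b)
    rw [Set.biUnion_of_singleton] at hb
    rw [hAS, hb]
  rw [key P hPc hA, key P' hP'c hA]
  exact tsum_congr fun x => hsing x.1.1 x.1.2
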